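/- Let 𝕄⁸ ⊂ M₇ₓ₇(ℝ) be the 8-dimensional image of the linear map ι: ℝ⁸ → M₇ₓ₇(ℝ), ι(x) = [[0₃ₓ₃, α(x)], [−α(x)ᵗ, 0₄ₓ₄]], where α(x) has rows (−x³ + √3·x⁴, −x⁵ + √3·x⁶, −x⁷ + √3·x⁸, −2x¹), (−x¹ − √3·x², x⁷ + √3·x⁸, −x⁵ − √3·x⁶, 2x³), (−2x⁷, x¹ − √3·x², −x³ − √3·x⁴, −2x⁵). Let s₁, s₂, s₃ be the 7×7 matrices which vanish outside the lower-right 4×4 block, with 4×4 blocks (1/2)·[[0,1,0,0],[−1,0,0,0],[0,0,0,−1],[0,0,1,0]], (1/2)·[[0,0,1,0],[0,0,0,1],[−1,0,0,0],[0,−1,0,0]], (1/2)·[[0,0,0,1],[0,0,−1,0],[0,1,0,0],[−1,0,0,0]] respectively, and let σ₁, σ₂, σ₃ be the 7×7 matrices σ₁ = [[0,−1,0],[1,0,0],[0,0,0]] ⊕ (1/2)·[[0,0,0,−1],[0,0,−1,0],[0,1,0,0],[1,0,0,0]], σ₂ = [[0,0,1],[0,0,0],[−1,0,0]] ⊕ (1/2)·[[0,0,1,0],[0,0,0,−1],[−1,0,0,0],[0,1,0,0]],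 σ₃ = [[0,0,0],[0,0,1],[0,−1,0]] ⊕ (1/2)·[[0,−1,0,0],[1,0,0,0],[0,0,0,−1],[0,0,1,0]] (direct sum of a 3×3 upper-left block and a 4×4 lower-right block). Then for every m ∈ {s₁,s₂,s₃,σ₁,σ₂,σ₃} and every x ∈ ℝ⁸, the commutator [m, ι(x)] = m·ι(x) − ι(x)·m belongs to 𝕄⁸, i.e. there exists y ∈ ℝ⁸ with [m, ι(x)] = ι(y). -/

import Mathlib

open Matrix Polynomial

/-- The linear embedding `ι : ℝ⁸ → M₇ₓ₇(ℝ)` onto the space `𝕄⁸` of antisymmetric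
7×7 matrices defining the `SU(2)×SU(2)` structure in dimension 8. -/
noncomputable def iota8 (x : Fin 8 → ℝ) : Matrix (Fin 7) (Fin 7) ℝ :=
  !![0, 0, 0, -x 2 + Real.sqrt 3 * x 3, -x 4 + Real.sqrt 3 * x 5,
       -x 6 + Real.sqrt 3 * x 7, -2 * x 0;
     0, 0, 0, -x 0 - Real.sqrt 3 * x 1, x 6 + Real.sqrt 3 * x 7,
       -x 4 - Real.sqrt 3 * x 5, 2 * x 2;
     0, 0, 0, -2 * x 6, x 0 - Real.sqrt 3 * x 1, -x 2 - Real.sqrt 3 * x 3, -2 * x 4;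
     x 2 - Real.sqrt 3 * x 3, x 0 + Real.sqrt 3 * x 1, 2 * x 6, 0, 0, 0, 0;
     x 4 - Real.sqrt 3 * x 5, -x 6 - Real.sqrt 3 * x 7, -x 0 + Real.sqrt 3 * x 1,
       0, 0, 0, 0;
     x 6 - Real.sqrt 3 * x 7, x 4 + Real.sqrt 3 * x 5, x 2 + Real.sqrt 3 * x 3,
       0, 0, 0, 0;
     2 * x 0, -2 * x 2, 2 * x 4, 0, 0, 0, 0]

/-- Generator `s₁` of the first `su(2)` (lower-right 4×4 block). -/
noncomputable def s1 : Matrix (Fin 7) (Fin 7) ℝ :=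
  !![0, 0, 0, 0, 0, 0, 0;
     0, 0, 0, 0, 0, 0, 0;
     0, 0, 0, 0, 0, 0, 0;
     0, 0, 0, 0, 1/2, 0, 0;
     0, 0, 0, -(1/2), 0, 0, 0;
     0, 0, 0, 0, 0, 0, -(1/2);
     0, 0, 0, 0, 0, 1/2, 0]

/-- Generator `s₂` of the first `su(2)` (lower-right 4×4 block). -/
noncomputable def s2 : Matrix (Fin 7) (Fin 7) ℝ :=
  !![0, 0, 0, 0, 0, 0, 0;
     0, 0, 0, 0, 0, 0, 0;
     0, 0, 0, 0, 0, 0, 0;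
     0, 0, 0, 0, 0, 1/2, 0;
     0, 0, 0, 0, 0, 0, 1/2;
     0, 0, 0, -(1/2), 0, 0, 0;
     0, 0, 0, 0, -(1/2), 0, 0]

/-- Generator `s₃` of the first `su(2)` (lower-right 4×4 block). -/
noncomputable def s3 : Matrix (Fin 7) (Fin 7) ℝ :=
  !![0, 0, 0, 0, 0, 0, 0;
     0, 0, 0, 0, 0, 0, 0;
     0, 0, 0, 0, 0, 0, 0;
     0, 0, 0, 0, 0, 0, 1/2;
     0, 0, 0, 0, 0, -(1/2), 0;
     0, 0, 0, 0, 1/2, 0, 0;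
     0, 0, 0, -(1/2), 0, 0, 0]

/-- Generator `σ₁` of the second `su(2)` (3×3 ⊕ 4×4 block form). -/
noncomputable def t1 : Matrix (Fin 7) (Fin 7) ℝ :=
  !![0, -1, 0, 0, 0, 0, 0;
     1, 0, 0, 0, 0, 0, 0;
     0, 0, 0, 0, 0, 0, 0;
     0, 0, 0, 0, 0, 0, -(1/2);
     0, 0, 0, 0, 0, -(1/2), 0;
     0, 0, 0, 0, 1/2, 0, 0;
     0, 0, 0, 1/2, 0, 0, 0]

/-- Generator `σ₂` of the second `su(2)` (3×3 ⊕ 4×4 block form). -/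
noncomputable def t2 : Matrix (Fin 7) (Fin 7) ℝ :=
  !![0, 0, 1, 0, 0, 0, 0;
     0, 0, 0, 0, 0, 0, 0;
     -1, 0, 0, 0, 0, 0, 0;
     0, 0, 0, 0, 0, 1/2, 0;
     0, 0, 0, 0, 0, 0, -(1/2);
     0, 0, 0, -(1/2), 0, 0, 0;
     0, 0, 0, 0, 1/2, 0, 0]

/-- Generator `σ₃` of the second `su(2)` (3×3 ⊕ 4×4 block form). -/
noncomputable def t3 : Matrix (Fin 7) (Fin 7) ℝ :=
  !![0, 0, 0, 0, 0, 0, 0;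
     0, 0, 1, 0, 0, 0, 0;
     0, -1, 0, 0, 0, 0, 0;
     0, 0, 0, 0, -(1/2), 0, 0;
     0, 0, 0, 1/2, 0, 0, 0;
     0, 0, 0, 0, 0, 0, -(1/2);
     0, 0, 0, 0, 0, 1/2, 0]


section AuxLemmas

lemma my_cons_sub {α : Type*} [Sub α] {n : ℕ} (a b : α) (u v : Fin n → α) :
    Matrix.vecCons a u - Matrix.vecCons b v = Matrix.vecCons (a - b) (u - v) :=
  funext fun i => Fin.cases rfl (fun _ => rfl) i

lemma my_empty_sub {α : Type*} [Sub α] (u v : Fin 0 → α) : u - v = ![] :=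
  Subsingleton.elim _ _

lemma my_neg_cons {α : Type*} [Neg α] {n : ℕ} (a : α) (u : Fin n → α) :
    -(Matrix.vecCons a u) = Matrix.vecCons (-a) (-u) :=
  funext fun i => Fin.cases rfl (fun _ => rfl) i

lemma my_neg_empty {α : Type*} [Neg α] (u : Fin 0 → α) : -u = ![] :=
  Subsingleton.elim _ _

lemma my_of_sub (u v : Fin 7 → Fin 7 → ℝ) :
    Matrix.of u - Matrix.of v = Matrix.of (u - v) := rfl

lemma my_of_eq (u v : Fin 7 → Fin 7 → ℝ) : (Matrix.of u = Matrix.of v) = (u = v) := rfl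

lemma my_cons_eq {α : Type*} {n : ℕ} (a b : α) (u v : Fin n → α) :
    (Matrix.vecCons a u = Matrix.vecCons b v) = (a = b ∧ u = v) := by
  ext
  constructor
  · intro h
    exact ⟨congrFun h 0, funext fun i => congrFun h i.succ⟩
  · rintro ⟨rfl, rfl⟩; rfl

lemma my_empty_eq {α : Type*} (u v : Fin 0 → α) : (u = v) = True := by
  simp [Subsingleton.elim u v]

lemma my_vec8_0 {α : Type*} (a0 a1 a2 a3 a4 a5 a6 a7 : α) :
    (![a0, a1, a2, a3, a4, a5, a6, a7] : Fin 8 → α) 0 = a0 := rfl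

lemma my_vec8_1 {α : Type*} (a0 a1 a2 a3 a4 a5 a6 a7 : α) :
    (![a0, a1, a2, a3, a4, a5, a6, a7] : Fin 8 → α) 1 = a1 := rfl

lemma my_vec8_2 {α : Type*} (a0 a1 a2 a3 a4 a5 a6 a7 : α) :
    (![a0, a1, a2, a3, a4, a5, a6, a7] : Fin 8 → α) 2 = a2 := rfl

lemma my_vec8_3 {α : Type*} (a0 a1 a2 a3 a4 a5 a6 a7 : α) :
    (![a0, a1, a2, a3, a4, a5, a6, a7] : Fin 8 → α) 3 = a3 := rfl

lemma my_vec8_4 {α : Type*} (a0 a1 a2 a3 a4 a5 a6 a7 : α) :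
    (![a0, a1, a2, a3, a4, a5, a6, a7] : Fin 8 → α) 4 = a4 := rfl

lemma my_vec8_5 {α : Type*} (a0 a1 a2 a3 a4 a5 a6 a7 : α) :
    (![a0, a1, a2, a3, a4, a5, a6, a7] : Fin 8 → α) 5 = a5 := rfl

lemma my_vec8_6 {α : Type*} (a0 a1 a2 a3 a4 a5 a6 a7 : α) :
    (![a0, a1, a2, a3, a4, a5, a6, a7] : Fin 8 → α) 6 = a6 := rfl

lemma my_vec8_7 {α : Type*} (a0 a1 a2 a3 a4 a5 a6 a7 : α) :
    (![a0, a1, a2, a3, a4, a5, a6, a7] : Fin 8 → α) 7 = a7 := rfl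

end AuxLemmas

set_option maxHeartbeats 1000000 in
theorem my_aux_s1 (x : Fin 8 → ℝ) :
    ∃ y : Fin 8 → ℝ, s1 * iota8 x - iota8 x * s1 = iota8 y := by
  have h3 : Real.sqrt 3 ^ 2 = 3 := Real.sq_sqrt (by norm_num)
  refine ⟨![((1/4:ℝ))*x 6 + ((-1/4:ℝ))*Real.sqrt 3 * x 7, ((-1/4:ℝ))*Real.sqrt 3 * x 6 + ((-1/4:ℝ))*x 7, ((-1/4:ℝ))*x 4 + ((-1/4:ℝ))*Real.sqrt 3 * x 5, ((-1/4:ℝ))*Real.sqrt 3 * x 4 + ((1/4:ℝ))*x 5, ((1/4:ℝ))*x 2 + ((1/4:ℝ))*Real.sqrt 3 * x 3, ((1/4:ℝ))*Real.sqrt 3 * x 2 + ((-1/4:ℝ))*x 3, ((-1/4:ℝ))*x 0 + ((1/4:ℝ))*Real.sqrt 3 * x 1, ((1/4:ℝ))*Real.sqrt 3 * x 0 + ((1/4:ℝ))*x 1], ?_⟩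
  simp only [iota8, s1, Matrix.cons_mul, Matrix.vecMul_cons, Matrix.empty_vecMul,
    Matrix.empty_mul, Matrix.head_cons, Matrix.tail_cons, Matrix.smul_cons,
    Matrix.smul_empty, smul_eq_mul, zero_smul, Matrix.add_cons,
    Matrix.empty_add_empty, Matrix.head_fin_const, Equiv.symm_apply_apply,
    my_of_sub, my_cons_sub, my_empty_sub, my_neg_cons, my_neg_empty, my_of_eq, my_cons_eq, my_empty_eq,
    and_true, Pi.zero_apply, zero_add, add_zero, mul_zero, mul_neg, mul_one, neg_zero, zero_sub, sub_zero,
    Matrix.neg_cons, Matrix.neg_empty, Matrix.zero_empty,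
    my_vec8_0, my_vec8_1, my_vec8_2, my_vec8_3, my_vec8_4, my_vec8_5, my_vec8_6, my_vec8_7]
  and_intros <;> (try ring_nf) <;> (try simp only [h3]) <;> (try ring_nf)

set_option maxHeartbeats 1000000 in
theorem my_aux_s2 (x : Fin 8 → ℝ) :
    ∃ y : Fin 8 → ℝ, s2 * iota8 x - iota8 x * s2 = iota8 y := by
  have h3 : Real.sqrt 3 ^ 2 = 3 := Real.sq_sqrt (by norm_num)
  refine ⟨![((-1/4:ℝ))*x 4 + ((1/4:ℝ))*Real.sqrt 3 * x 5, ((1/4:ℝ))*Real.sqrt 3 * x 4 + ((1/4:ℝ))*x 5, ((-1/4:ℝ))*x 6 + ((-1/4:ℝ))*Real.sqrt 3 * x 7, ((-1/4:ℝ))*Real.sqrt 3 * x 6 + ((1/4:ℝ))*x 7, ((1/4:ℝ))*x 0 + ((-1/4:ℝ))*Real.sqrt 3 * x 1, ((-1/4:ℝ))*Real.sqrt 3 * x 0 + ((-1/4:ℝ))*x 1, ((1/4:ℝ))*x 2 + ((1/4:ℝ))*Real.sqrt 3 * x 3, ((1/4:ℝ))*Real.sqrt 3 * x 2 + ((-1/4:ℝ))*x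 3], ?_⟩
  simp only [iota8, s2, Matrix.cons_mul, Matrix.vecMul_cons, Matrix.empty_vecMul,
    Matrix.empty_mul, Matrix.head_cons, Matrix.tail_cons, Matrix.smul_cons,
    Matrix.smul_empty, smul_eq_mul, zero_smul, Matrix.add_cons,
    Matrix.empty_add_empty, Matrix.head_fin_const, Equiv.symm_apply_apply,
    my_of_sub, my_cons_sub, my_empty_sub, my_neg_cons, my_neg_empty, my_of_eq, my_cons_eq, my_empty_eq,
    and_true, Pi.zero_apply, zero_add, add_zero, mul_zero, mul_neg, mul_one, neg_zero, zero_sub, sub_zero,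
    Matrix.neg_cons, Matrix.neg_empty, Matrix.zero_empty,
    my_vec8_0, my_vec8_1, my_vec8_2, my_vec8_3, my_vec8_4, my_vec8_5, my_vec8_6, my_vec8_7]
  and_intros <;> (try ring_nf) <;> (try simp only [h3]) <;> (try ring_nf)

set_option maxHeartbeats 1000000 in
theorem my_aux_s3 (x : Fin 8 → ℝ) :
    ∃ y : Fin 8 → ℝ, s3 * iota8 x - iota8 x * s3 = iota8 y := by
  have h3 : Real.sqrt 3 ^ 2 = 3 := Real.sq_sqrt (by norm_num)
  refine ⟨![((-1/4:ℝ))*x 2 + ((1/4:ℝ))*Real.sqrt 3 * x 3, ((-1/4:ℝ))*Real.sqrt 3 * x 2 + ((-1/4:ℝ))*x 3, ((1/4:ℝ))*x 0 + ((1/4:ℝ))*Real.sqrt 3 * x 1, ((-1/4:ℝ))*Real.sqrt 3 * x 0 + ((1/4:ℝ))*x 1, ((-1/2:ℝ))*x 6, ((-1/2:ℝ))*x 7, ((1/2:ℝ))*x 4, ((1/2:ℝ))*x 5], ?_⟩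
  simp only [iota8, s3, Matrix.cons_mul, Matrix.vecMul_cons, Matrix.empty_vecMul,
    Matrix.empty_mul, Matrix.head_cons, Matrix.tail_cons, Matrix.smul_cons,
    Matrix.smul_empty, smul_eq_mul, zero_smul, Matrix.add_cons,
    Matrix.empty_add_empty, Matrix.head_fin_const, Equiv.symm_apply_apply,
    my_of_sub, my_cons_sub, my_empty_sub, my_neg_cons, my_neg_empty, my_of_eq, my_cons_eq, my_empty_eq,
    and_true, Pi.zero_apply, zero_add, add_zero, mul_zero, mul_neg, mul_one, neg_zero, zero_sub, sub_zero,
    Matrix.neg_cons, Matrix.neg_empty, Matrix.zero_empty,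
    my_vec8_0, my_vec8_1, my_vec8_2, my_vec8_3, my_vec8_4, my_vec8_5, my_vec8_6, my_vec8_7]
  and_intros <;> (try ring_nf) <;> (try simp only [h3]) <;> (try ring_nf)

set_option maxHeartbeats 1000000 in
theorem my_aux_t1 (x : Fin 8 → ℝ) :
    ∃ y : Fin 8 → ℝ, t1 * iota8 x - iota8 x * t1 = iota8 y := by
  have h3 : Real.sqrt 3 ^ 2 = 3 := Real.sq_sqrt (by norm_num)
  refine ⟨![((5/4:ℝ))*x 2 + ((-1/4:ℝ))*Real.sqrt 3 * x 3, ((1/4:ℝ))*Real.sqrt 3 * x 2 + ((-3/4:ℝ))*x 3, ((-5/4:ℝ))*x 0 + ((-1/4:ℝ))*Real.sqrt 3 * x 1, ((1/4:ℝ))*Real.sqrt 3 * x 0 + ((3/4:ℝ))*x 1, ((1/2:ℝ))*x 6, ((-3/2:ℝ))*x 7, ((-1/2:ℝ))*x 4, ((3/2:ℝ))*x 5], ?_⟩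
  simp only [iota8, t1, Matrix.cons_mul, Matrix.vecMul_cons, Matrix.empty_vecMul,
    Matrix.empty_mul, Matrix.head_cons, Matrix.tail_cons, Matrix.smul_cons,
    Matrix.smul_empty, smul_eq_mul, zero_smul, Matrix.add_cons,
    Matrix.empty_add_empty, Matrix.head_fin_const, Equiv.symm_apply_apply,
    my_of_sub, my_cons_sub, my_empty_sub, my_neg_cons, my_neg_empty, my_of_eq, my_cons_eq, my_empty_eq,
    and_true, Pi.zero_apply, zero_add, add_zero, mul_zero, mul_neg, mul_one, neg_zero, zero_sub, sub_zero,
    Matrix.neg_cons, Matrix.neg_empty, Matrix.zero_empty,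
    my_vec8_0, my_vec8_1, my_vec8_2, my_vec8_3, my_vec8_4, my_vec8_5, my_vec8_6, my_vec8_7]
  and_intros <;> (try ring_nf) <;> (try simp only [h3]) <;> (try ring_nf)

set_option maxHeartbeats 1000000 in
theorem my_aux_t2 (x : Fin 8 → ℝ) :
    ∃ y : Fin 8 → ℝ, t2 * iota8 x - iota8 x * t2 = iota8 y := by
  have h3 : Real.sqrt 3 ^ 2 = 3 := Real.sq_sqrt (by norm_num)
  refine ⟨![((5/4:ℝ))*x 4 + ((-1/4:ℝ))*Real.sqrt 3 * x 5, ((-1/4:ℝ))*Real.sqrt 3 * x 4 + ((3/4:ℝ))*x 5, ((1/4:ℝ))*x 6 + ((1/4:ℝ))*Real.sqrt 3 * x 7, ((-3/4:ℝ))*Real.sqrt 3 * x 6 + ((3/4:ℝ))*x 7, ((-5/4:ℝ))*x 0 + ((1/4:ℝ))*Real.sqrt 3 * x 1, ((1/4:ℝ))*Real.sqrt 3 * x 0 + ((-3/4:ℝ))*x 1, ((-1/4:ℝ))*x 2 + ((3/4:ℝ))*Real.sqrt 3 * x 3, ((-1/4:ℝ))*Real.sqrt 3 * x 2 + ((-3/4:ℝ))*x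 3], ?_⟩
  simp only [iota8, t2, Matrix.cons_mul, Matrix.vecMul_cons, Matrix.empty_vecMul,
    Matrix.empty_mul, Matrix.head_cons, Matrix.tail_cons, Matrix.smul_cons,
    Matrix.smul_empty, smul_eq_mul, zero_smul, Matrix.add_cons,
    Matrix.empty_add_empty, Matrix.head_fin_const, Equiv.symm_apply_apply,
    my_of_sub, my_cons_sub, my_empty_sub, my_neg_cons, my_neg_empty, my_of_eq, my_cons_eq, my_empty_eq,
    and_true, Pi.zero_apply, zero_add, add_zero, mul_zero, mul_neg, mul_one, neg_zero, zero_sub, sub_zero,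
    Matrix.neg_cons, Matrix.neg_empty, Matrix.zero_empty,
    my_vec8_0, my_vec8_1, my_vec8_2, my_vec8_3, my_vec8_4, my_vec8_5, my_vec8_6, my_vec8_7]
  and_intros <;> (try ring_nf) <;> (try simp only [h3]) <;> (try ring_nf)

set_option maxHeartbeats 1000000 in
theorem my_aux_t3 (x : Fin 8 → ℝ) :
    ∃ y : Fin 8 → ℝ, t3 * iota8 x - iota8 x * t3 = iota8 y := by
  have h3 : Real.sqrt 3 ^ 2 = 3 := Real.sq_sqrt (by norm_num)
  refine ⟨![((1/4:ℝ))*x 6 + ((-1/4:ℝ))*Real.sqrt 3 * x 7, ((3/4:ℝ))*Real.sqrt 3 * x 6 + ((3/4:ℝ))*x 7, ((-5/4:ℝ))*x 4 + ((-1/4:ℝ))*Real.sqrt 3 * x 5, ((-1/4:ℝ))*Real.sqrt 3 * x 4 + ((-3/4:ℝ))*x 5, ((5/4:ℝ))*x 2 + ((1/4:ℝ))*Real.sqrt 3 * x 3, ((1/4:ℝ))*Real.sqrt 3 * x 2 + ((3/4:ℝ))*x 3, ((-1/4:ℝ))*x 0 + ((-3/4:ℝ))*Real.sqrt 3 * x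 1, ((1/4:ℝ))*Real.sqrt 3 * x 0 + ((-3/4:ℝ))*x 1], ?_⟩
  simp only [iota8, t3, Matrix.cons_mul, Matrix.vecMul_cons, Matrix.empty_vecMul,
    Matrix.empty_mul, Matrix.head_cons, Matrix.tail_cons, Matrix.smul_cons,
    Matrix.smul_empty, smul_eq_mul, zero_smul, Matrix.add_cons,
    Matrix.empty_add_empty, Matrix.head_fin_const, Equiv.symm_apply_apply,
    my_of_sub, my_cons_sub, my_empty_sub, my_neg_cons, my_neg_empty, my_of_eq, my_cons_eq, my_empty_eq,
    and_true, Pi.zero_apply, zero_add, add_zero, mul_zero, mul_neg, mul_one, neg_zero, zero_sub, sub_zero,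
    Matrix.neg_cons, Matrix.neg_empty, Matrix.zero_empty,
    my_vec8_0, my_vec8_1, my_vec8_2, my_vec8_3, my_vec8_4, my_vec8_5, my_vec8_6, my_vec8_7]
  and_intros <;> (try ring_nf) <;> (try simp only [h3]) <;> (try ring_nf)

/-- For each generator `m` of the `su(2)⊕su(2)` algebra and each `x ∈ ℝ⁸`, the
commutator `[m, ι(x)]` again lies in the 8-dimensional space `𝕄⁸ = ι(ℝ⁸)`. -/
theorem statement18 (m : Matrix (Fin 7) (Fin 7) ℝ)
    (hm : m = s1 ∨ m = s2 ∨ m = s3 ∨ m = t1 ∨ m = t2 ∨ m = t3) (x : Fin 8 → ℝ) :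
    ∃ y : Fin 8 → ℝ, m * iota8 x - iota8 x * m = iota8 y := by
  rcases hm with rfl | rfl | rfl | rfl | rfl | rfl
  · exact my_aux_s1 x
  · exact my_aux_s2 x
  · exact my_aux_s3 x
  · exact my_aux_t1 x
  · exact my_aux_t2 x
  · exact my_aux_t3 x
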